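/- arXiv:1605.01473 — 2 statements merged into one kernel-verified Lean document; each statement's English description precedes it below -/
import Mathlib

section
/- Let m, n, p be positive integers, let l : Fin m → Fin p be a map, let v ∈ ℂ^m, and let V be an m×n complex matrix. For r ∈ ℂ^p, let D_r denote the m×m diagonal matrix whose t-th diagonal entry is r(l(t)). If v does not lie in the column span of V, then the set {r ∈ ℂ^p : D_r v lies in the column span of V} has Lebesgue measure zero in ℂ^p. -/
open Matrix MeasureTheory

/-- The column span of an `m × n` complex matrix: the range of `x ↦ M x`. -/
noncomputable def colSpan {m n : ℕ} (M : Matrix (Fin m) (Fin n) ℂ) :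
    Submodule ℂ (Fin m → ℂ) :=
  LinearMap.range M.mulVecLin

/-- The `m × m` diagonal matrix whose `t`-th diagonal entry is `r (l t)`. -/
def patDiag {m p : ℕ} (l : Fin m → Fin p) (r : Fin p → ℂ) :
    Matrix (Fin m) (Fin m) ℂ :=
  Matrix.diagonal (r ∘ l)

theorem stmt6 (m n p : ℕ) (hm : 0 < m) (hn : 0 < n) (hp : 0 < p)
    (l : Fin m → Fin p) (v : Fin m → ℂ) (V : Matrix (Fin m) (Fin n) ℂ)
    (hv : v ∉ colSpan V) :
    volume {r : Fin p → ℂ | (patDiag l r).mulVec v ∈ colSpan V} = 0 := by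
  -- The map r ↦ D_r v is linear in r.
  set L : (Fin p → ℂ) →ₗ[ℂ] (Fin m → ℂ) :=
    { toFun := fun r => (patDiag l r).mulVec v
      map_add' := by
        intro a b
        funext t
        simp [patDiag, Matrix.mulVec_diagonal, add_mul]
      map_smul' := by
        intro c a
        funext t
        simp [patDiag, Matrix.mulVec_diagonal, mul_assoc] } with hL
  set S : Submodule ℂ (Fin p → ℂ) := (colSpan V).comap L with hS
  have hset : {r : Fin p → ℂ | (patDiag l r).mulVec v ∈ colSpan V} = (S : Set (Fin p → ℂ)) := rfl
  rw [hset]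
  have hSne : S.restrictScalars ℝ ≠ ⊤ := by
    intro h
    apply hv
    have h1 : (fun _ => (1 : ℂ)) ∈ S.restrictScalars ℝ := h ▸ Submodule.mem_top
    have h2 : L (fun _ => (1 : ℂ)) ∈ colSpan V := h1
    have : L (fun _ => (1 : ℂ)) = v := by
      funext t
      simp [hL, patDiag, Matrix.mulVec_diagonal]
    rwa [this] at h2
  have := MeasureTheory.Measure.addHaar_submodule (volume : Measure (Fin p → ℂ))
    (S.restrictScalars ℝ) hSne
  simpa using this
end

section
/- Let m, n₁, n₂, p be positive integers, let l : Fin m → Fin p be a map, and let V₁ and V₂ be m×n₁ and m×n₂ complex matrices. For r ∈ ℂ^p, let D_r denote the m×m diagonal matrix whose t-th diagonal entry is r(l(t)). Then for almost every (r, s) ∈ ℂ^p × ℂ^p, the dimension of the intersection of the column span of D_r V₁ with the column span of D_s V₂ is at most the dimension of the intersection of the column span of V₁ with the column span of V₂. -/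
open Matrix MeasureTheory Module MvPolynomial

section Aux

set_option linter.unusedSectionVars false
set_option linter.unusedVariables false


lemma measurable_mveval {k : ℕ} (q : MvPolynomial (Fin k) ℂ) :
    Measurable fun x : Fin k → ℂ => eval x q := by
  simp only [MvPolynomial.eval_eq]
  exact Finset.measurable_sum _ fun d _ =>
    (measurable_const.mul (Finset.measurable_prod _ fun i _ =>
      (measurable_pi_apply i).pow_const _))

lemma mv_null : ∀ (n : ℕ) (q : MvPolynomial (Fin n) ℂ), q ≠ 0 →
    volume {x : Fin n → ℂ | eval x q = 0} = 0 := by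
  intro n
  induction n with
  | zero =>
    intro q hq
    convert measure_empty (μ := (volume : Measure (Fin 0 → ℂ)))
    ext x
    simp only [Set.mem_setOf_eq, Set.mem_empty_iff_false, iff_false]
    intro h
    apply hq
    apply MvPolynomial.funext
    intro y
    rw [Subsingleton.elim y x, h, map_zero]
  | succ n ih =>
    intro q hq
    set e := MeasurableEquiv.piFinSuccAbove (fun _ : Fin (n+1) => ℂ) 0 with he
    have hmp := MeasureTheory.volume_preserving_piFinSuccAbove (fun _ : Fin (n+1) => ℂ) 0
    set T : Set (ℂ × (Fin n → ℂ)) := {ys | eval (Fin.cons ys.1 ys.2) q = 0} with hT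
    have hTmeas : MeasurableSet T := by
      have : Measurable fun ys : ℂ × (Fin n → ℂ) => eval (Fin.cons ys.1 ys.2) q :=
        (measurable_mveval q).comp (by
          apply measurable_pi_iff.2
          intro i
          refine Fin.cases ?_ ?_ i
          · simpa using measurable_fst
          · intro j; simp only [Fin.cons_succ]; exact (measurable_pi_apply j).comp measurable_snd)
      exact this (measurableSet_singleton 0)
    have hST : {x : Fin (n+1) → ℂ | eval x q = 0} = e ⁻¹' T := by
      ext x
      have hx : Fin.cons (e x).1 (e x).2 = x := by
        ext i
        refine Fin.cases ?_ ?_ i <;> intros <;>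
          simp [he, MeasurableEquiv.piFinSuccAbove, Fin.insertNthEquiv, Fin.succAbove, Fin.tail]
      simp only [Set.mem_preimage, hT, Set.mem_setOf_eq, hx]
    rw [hST, hmp.measure_preimage hTmeas.nullMeasurableSet]
    have hvol : (volume : Measure (ℂ × (Fin n → ℂ))) = (volume : Measure ℂ).prod volume := rfl
    rw [hvol, Measure.measure_prod_null hTmeas]
    set P := finSuccEquiv ℂ n q with hP
    have hPne : P ≠ 0 := by
      simp only [hP]
      intro h
      exact hq (by simpa using congrArg (finSuccEquiv ℂ n).symm h)
    have hroots : {y : ℂ | Polynomial.eval (C y) P = 0}.Finite := by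
      by_contra hinf
      apply hPne
      apply Polynomial.eq_zero_of_infinite_isRoot
      have : Set.InjOn (fun y : ℂ => (C y : MvPolynomial (Fin n) ℂ))
          {y : ℂ | Polynomial.eval (C y) P = 0} := fun a _ b _ hab => C_injective _ _ hab
      have himg := (Set.Infinite.image this hinf : _)
      exact himg.mono (by rintro z ⟨y, hy, rfl⟩; exact hy)
    have hfin : volume {y : ℂ | Polynomial.eval (C y) P = 0} = 0 := hroots.measure_zero _
    have hval : ∀ (y : ℂ) (s : Fin n → ℂ),
        eval (Fin.cons y s) q = eval s (Polynomial.eval (C y) P) := by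
      intro y s
      rw [eval_eq_eval_mv_eval' s y q, ← hP, Polynomial.eval_map,
        show y = (eval s) (C y) by simp, Polynomial.eval₂_at_apply]
      simp
    have hae : ∀ᵐ y : ℂ, Polynomial.eval (C y) P ≠ 0 := by
      rw [ae_iff]
      push_neg
      simpa using hfin
    filter_upwards [hae] with y hy
    have : Prod.mk y ⁻¹' T = {s : Fin n → ℂ | eval s (Polynomial.eval (C y) P) = 0} := by
      ext s
      simp only [Set.mem_preimage, hT, Set.mem_setOf_eq, hval]
    simp only [this, Pi.zero_apply]
    exact ih _ hy

lemma measurable_mvevalS {p : ℕ} (q : MvPolynomial (Fin p ⊕ Fin p) ℂ) :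
    Measurable fun x : (Fin p ⊕ Fin p) → ℂ => eval x q := by
  simp only [MvPolynomial.eval_eq]
  exact Finset.measurable_sum _ fun d _ =>
    (measurable_const.mul (Finset.measurable_prod _ fun i _ =>
      (measurable_pi_apply i).pow_const _))

lemma ae_eval_ne {p : ℕ} (q : MvPolynomial (Fin p ⊕ Fin p) ℂ) (hq : q ≠ 0) :
    ∀ᵐ rs : (Fin p → ℂ) × (Fin p → ℂ), eval (Sum.elim rs.1 rs.2) q ≠ 0 := by
  set f : Fin (p + p) ≃ (Fin p ⊕ Fin p) := finSumFinEquiv.symm with hf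
  set Z : Set ((Fin p ⊕ Fin p) → ℂ) := {x | eval x q = 0} with hZ
  have hZmeas : MeasurableSet Z := measurable_mvevalS q (measurableSet_singleton 0)
  have hZ0 : volume Z = 0 := by
    set g := MeasurableEquiv.piCongrLeft (fun _ : Fin p ⊕ Fin p => ℂ) f with hg
    have hgmp := MeasureTheory.volume_measurePreserving_piCongrLeft
      (fun _ : Fin p ⊕ Fin p => ℂ) f
    rw [← hgmp.measure_preimage hZmeas.nullMeasurableSet]
    have hpre : g ⁻¹' Z = {x : Fin (p+p) → ℂ | eval x (rename f.symm q) = 0} := by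
      ext x
      simp only [Set.mem_preimage, hZ, Set.mem_setOf_eq, eval_rename]
      have hgx : ∀ j, g x (f j) = x j := by
        intro j
        rw [hg]
        erw [MeasurableEquiv.piCongrLeft_apply_apply]
      have : g x = x ∘ ⇑f.symm := by
        ext i
        conv_lhs => rw [show i = f (f.symm i) by simp]
        rw [hgx]
        rfl
      rw [this]
    rw [hpre]
    exact mv_null _ _ (fun h => hq (rename_injective _ f.symm.injective (by simpa using h)))
  -- now transfer along sumPiEquivProdPi
  set h := MeasurableEquiv.sumPiEquivProdPi (fun _ : Fin p ⊕ Fin p => ℂ) with hh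
  have hmp := MeasureTheory.volume_measurePreserving_sumPiEquivProdPi_symm
    (fun _ : Fin p ⊕ Fin p => ℂ)
  have key : volume {rs : (Fin p → ℂ) × (Fin p → ℂ) | eval (Sum.elim rs.1 rs.2) q = 0} = 0 := by
    have hpre : {rs : (Fin p → ℂ) × (Fin p → ℂ) | eval (Sum.elim rs.1 rs.2) q = 0}
        = h.symm ⁻¹' Z := by
      ext rs
      have : h.symm rs = Sum.elim rs.1 rs.2 := by
        ext i
        cases i <;> rfl
      simp [hZ, this]
    rw [hpre, hmp.measure_preimage hZmeas.nullMeasurableSet]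
    exact hZ0
  rw [ae_iff]
  convert key using 2
  ext rs
  simp

lemma finrank_colSpan {m n : ℕ} (M : Matrix (Fin m) (Fin n) ℂ) :
    finrank ℂ (colSpan M) = M.rank := rfl

lemma colSpan_sup {m n₁ n₂ : ℕ} (A : Matrix (Fin m) (Fin n₁) ℂ) (B : Matrix (Fin m) (Fin n₂) ℂ) :
    colSpan A ⊔ colSpan B = LinearMap.range (fromCols A B).mulVecLin := by
  apply le_antisymm
  · rw [sup_le_iff]
    constructor
    · rintro v ⟨x, rfl⟩
      exact ⟨Sum.elim x 0, by simp [mulVecLin_apply, fromCols_mulVec_sumElim]⟩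
    · rintro v ⟨x, rfl⟩
      exact ⟨Sum.elim 0 x, by simp [mulVecLin_apply, fromCols_mulVec_sumElim]⟩
  · rintro v ⟨x, rfl⟩
    have : (fromCols A B).mulVecLin x
        = A.mulVecLin (x ∘ Sum.inl) + B.mulVecLin (x ∘ Sum.inr) := by
      simp only [mulVecLin_apply]
      rw [show x = Sum.elim (x ∘ Sum.inl) (x ∘ Sum.inr) by ext i; cases i <;> rfl,
        fromCols_mulVec_sumElim]
      simp
    rw [this]
    exact Submodule.add_mem_sup ⟨_, rfl⟩ ⟨_, rfl⟩

variable {ι : Type*} [Fintype ι] [DecidableEq ι]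

lemma rank_submatrix_le' {m k : ℕ} (A : Matrix (Fin m) ι ℂ) (f : Fin k → Fin m) (g : Fin k → ι) :
    (A.submatrix f g).rank ≤ A.rank := by
  have h1 : ((1 : Matrix (Fin m) (Fin m) ℂ).submatrix f ⇑(Equiv.refl (Fin m))) * A
      = A.submatrix f id := by
    rw [one_submatrix_mul]
    rfl
  have h2 : (A.submatrix f id) * ((1 : Matrix ι ι ℂ).submatrix ⇑(Equiv.refl ι) g)
      = A.submatrix f g := by
    rw [mul_submatrix_one]
    rfl
  calc (A.submatrix f g).rank
      = ((A.submatrix f id) * ((1 : Matrix ι ι ℂ).submatrix ⇑(Equiv.refl ι) g)).rank := by rw [h2]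
    _ ≤ (A.submatrix f id).rank := rank_mul_le_left _ _
    _ = (((1 : Matrix (Fin m) (Fin m) ℂ).submatrix f ⇑(Equiv.refl (Fin m))) * A).rank := by rw [h1]
    _ ≤ A.rank := rank_mul_le_right _ _

-- full-rank square matrix has nonzero det
lemma det_ne_zero_of_rank {k : ℕ} (M : Matrix (Fin k) (Fin k) ℂ) (h : M.rank = k) :
    M.det ≠ 0 := by
  have : LinearIndependent ℂ M.row := by
    rw [linearIndependent_iff_card_eq_finrank_span]
    rw [Matrix.rank_eq_finrank_span_row] at h
    simpa [Set.finrank] using h.symm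
  have hu := linearIndependent_rows_iff_isUnit.mp this
  exact ((isUnit_iff_isUnit_det M).mp hu).ne_zero

lemma rank_ge_of_minor {m k : ℕ} (A : Matrix (Fin m) ι ℂ) (f : Fin k → Fin m) (g : Fin k → ι)
    (h : (A.submatrix f g).det ≠ 0) : k ≤ A.rank := by
  have hu : IsUnit (A.submatrix f g) := (isUnit_iff_isUnit_det _).mpr (isUnit_iff_ne_zero.mpr h)
  have := Matrix.rank_of_isUnit _ hu
  calc k = (A.submatrix f g).rank := by rw [this, Fintype.card_fin]
    _ ≤ A.rank := rank_submatrix_le' A f g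

lemma exists_cols {m : ℕ} (A : Matrix (Fin m) ι ℂ) (k : ℕ) (hk : A.rank = k) :
    ∃ g : Fin k → ι, (A.submatrix id g).rank = k := by
  obtain ⟨b, hbsub, hbspan, hbind⟩ := exists_linearIndependent ℂ (Set.range Aᵀ)
  have hbfin : b.Finite := hbind.setFinite
  haveI := hbfin.fintype
  have hcard : Fintype.card b = k := by
    have := linearIndependent_iff_card_eq_finrank_span.mp hbind
    rw [this, Set.finrank, Subtype.range_coe, hbspan]
    rw [rank_eq_finrank_span_cols] at hk
    exact hk
  obtain e : Fin k ≃ b := (Fintype.equivFinOfCardEq hcard).symm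
  have hchoice : ∀ j : Fin k, ∃ i : ι, Aᵀ i = ↑(e j) := fun j => hbsub (e j).2
  choose g hg using hchoice
  refine ⟨g, ?_⟩
  rw [rank_eq_finrank_span_cols]
  have hrange : Set.range (A.submatrix id g)ᵀ = b := by
    ext v
    constructor
    · rintro ⟨j, rfl⟩
      have : (A.submatrix id g)ᵀ j = Aᵀ (g j) := rfl
      rw [this, hg]
      exact (e j).2
    · intro hv
      refine ⟨e.symm ⟨v, hv⟩, ?_⟩
      have : (A.submatrix id g)ᵀ (e.symm ⟨v, hv⟩) = Aᵀ (g (e.symm ⟨v, hv⟩)) := rfl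
      rw [this, hg, e.apply_symm_apply]
  change finrank ℂ (Submodule.span ℂ (Set.range (A.submatrix id g)ᵀ)) = k
  rw [hrange, ← Subtype.range_coe (s := b), ← Set.finrank,
    ← linearIndependent_iff_card_eq_finrank_span.mp hbind, hcard]

lemma exists_minor {m : ℕ} (A : Matrix (Fin m) ι ℂ) (k : ℕ) (hk : A.rank = k) :
    ∃ (f : Fin k → Fin m) (g : Fin k → ι), (A.submatrix f g).det ≠ 0 := by
  obtain ⟨g, hg⟩ := exists_cols A k hk
  have hBt : ((A.submatrix id g)ᵀ).rank = k := by
    rw [rank_transpose]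
    exact hg
  obtain ⟨f, hf⟩ := exists_cols ((A.submatrix id g)ᵀ) k hBt
  refine ⟨f, g, ?_⟩
  have heq : ((A.submatrix id g)ᵀ).submatrix id f = (A.submatrix f g)ᵀ := by
    ext i j
    rfl
  rw [heq] at hf
  have := det_ne_zero_of_rank _ hf
  rwa [det_transpose] at this

end Aux

theorem stmt8 (m n₁ n₂ p : ℕ) (hm : 0 < m) (hn₁ : 0 < n₁) (hn₂ : 0 < n₂) (hp : 0 < p)
    (l : Fin m → Fin p)
    (V₁ : Matrix (Fin m) (Fin n₁) ℂ) (V₂ : Matrix (Fin m) (Fin n₂) ℂ) :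
    ∀ᵐ rs : (Fin p → ℂ) × (Fin p → ℂ),
      finrank ℂ ↥(colSpan (patDiag l rs.1 * V₁) ⊓ colSpan (patDiag l rs.2 * V₂)) ≤
        finrank ℂ ↥(colSpan V₁ ⊓ colSpan V₂) := by
  classical
  set k := (fromCols V₁ V₂).rank with hk
  obtain ⟨f, g, hfg⟩ := exists_minor (fromCols V₁ V₂) k rfl
  -- polynomial matrix
  set W : Matrix (Fin m) (Fin n₁ ⊕ Fin n₂) (MvPolynomial (Fin p ⊕ Fin p) ℂ) :=
    fromCols
      (Matrix.of fun t j => X (Sum.inl (l t)) * C (V₁ t j))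
      (Matrix.of fun t j => X (Sum.inr (l t)) * C (V₂ t j)) with hW
  have hWmap : ∀ x : Fin p ⊕ Fin p → ℂ,
      W.map (eval x) = fromCols (patDiag l (x ∘ Sum.inl) * V₁) (patDiag l (x ∘ Sum.inr) * V₂) := by
    intro x
    ext t j
    cases j with
    | inl j => simp [hW, patDiag, map_apply, fromCols, Matrix.diagonal_mul]
    | inr j => simp [hW, patDiag, map_apply, fromCols, Matrix.diagonal_mul]
  have hevaldet : ∀ x : Fin p ⊕ Fin p → ℂ,
      eval x (W.submatrix f g).det =
        ((fromCols (patDiag l (x ∘ Sum.inl) * V₁) (patDiag l (x ∘ Sum.inr) * V₂)).submatrix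
          f g).det := by
    intro x
    rw [RingHom.map_det, RingHom.mapMatrix_apply, ← submatrix_map, hWmap]
  set Pdet := (W.submatrix f g).det with hPdet
  have hPne : Pdet ≠ 0 := by
    intro h0
    apply hfg
    have := hevaldet (fun _ => 1)
    rw [h0, map_zero] at this
    have h1 : ∀ r : Fin p → ℂ, (∀ i, r i = 1) → patDiag l r = 1 := by
      intro r hr1
      have : r ∘ l = fun _ => 1 := by ext t; exact hr1 (l t)
      rw [patDiag, this, Matrix.diagonal_one]
    rw [show patDiag l ((fun _ : Fin p ⊕ Fin p => (1:ℂ)) ∘ Sum.inl) = 1 from h1 _ (fun _ => rfl),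
      show patDiag l ((fun _ : Fin p ⊕ Fin p => (1:ℂ)) ∘ Sum.inr) = 1 from h1 _ (fun _ => rfl),
      Matrix.one_mul, Matrix.one_mul] at this
    exact this.symm
  set Q : MvPolynomial (Fin p ⊕ Fin p) ℂ :=
    Pdet * ((∏ i : Fin p, X (Sum.inl i)) * ∏ i : Fin p, X (Sum.inr i)) with hQ
  have hQne : Q ≠ 0 := by
    refine mul_ne_zero hPne (mul_ne_zero ?_ ?_) <;>
      exact Finset.prod_ne_zero_iff.mpr fun i _ => X_ne_zero _
  filter_upwards [ae_eval_ne Q hQne] with rs hrs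
  obtain ⟨r, s⟩ := rs
  simp only at hrs ⊢
  rw [hQ, _root_.map_mul, _root_.map_mul, map_prod, map_prod] at hrs
  have hr : ∀ i, r i ≠ 0 := fun i h => by
    apply hrs
    rw [mul_eq_zero]; right; rw [mul_eq_zero]; left
    exact Finset.prod_eq_zero (Finset.mem_univ i) (by simpa using h)
  have hs : ∀ i, s i ≠ 0 := fun i h => by
    apply hrs
    rw [mul_eq_zero]; right; rw [mul_eq_zero]; right
    exact Finset.prod_eq_zero (Finset.mem_univ i) (by simpa using h)
  have hdet : ((fromCols (patDiag l r * V₁) (patDiag l s * V₂)).submatrix f g).det ≠ 0 := by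
    intro h0
    apply hrs
    rw [mul_eq_zero]; left
    have := hevaldet (Sum.elim r s)
    rw [show (Sum.elim r s) ∘ Sum.inl = r from rfl, show (Sum.elim r s) ∘ Sum.inr = s from rfl]
      at this
    rw [this, h0]
  -- rank facts
  have hdr : IsUnit (patDiag l r).det := by
    rw [patDiag, det_diagonal]
    exact isUnit_iff_ne_zero.mpr (Finset.prod_ne_zero_iff.mpr fun t _ => hr (l t))
  have hds : IsUnit (patDiag l s).det := by
    rw [patDiag, det_diagonal]
    exact isUnit_iff_ne_zero.mpr (Finset.prod_ne_zero_iff.mpr fun t _ => hs (l t))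
  have hrk1 : (patDiag l r * V₁).rank = V₁.rank := rank_mul_eq_right_of_isUnit_det _ _ hdr
  have hrk2 : (patDiag l s * V₂).rank = V₂.rank := rank_mul_eq_right_of_isUnit_det _ _ hds
  have hbig : k ≤ (fromCols (patDiag l r * V₁) (patDiag l s * V₂)).rank :=
    rank_ge_of_minor _ f g hdet
  -- dimension formulas
  have e1 := Submodule.finrank_sup_add_finrank_inf_eq
    (colSpan (patDiag l r * V₁)) (colSpan (patDiag l s * V₂))
  have e2 := Submodule.finrank_sup_add_finrank_inf_eq (colSpan V₁) (colSpan V₂)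
  rw [colSpan_sup, finrank_colSpan, finrank_colSpan] at e1 e2
  have hsup1 : finrank ℂ ↥(LinearMap.range
      (fromCols (patDiag l r * V₁) (patDiag l s * V₂)).mulVecLin)
      = (fromCols (patDiag l r * V₁) (patDiag l s * V₂)).rank := rfl
  have hsup2 : finrank ℂ ↥(LinearMap.range (fromCols V₁ V₂).mulVecLin)
      = (fromCols V₁ V₂).rank := rfl
  rw [hsup1, hrk1, hrk2] at e1
  rw [hsup2, ← hk] at e2
  omega
end
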